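/- Let F_n be the free group on n ≥ 1 generators and B ≥ 1 an integer. The subgroup of F_n generated by the set of all elements of reduced word length exactly B has finite index in F_n. -/

import Mathlib

open FreeGroup

private lemma reduced_suffix {α : Type*} [DecidableEq α] {l₁ l₂ : List (α × Bool)}
    (h : FreeGroup.reduce (l₁ ++ l₂) = l₁ ++ l₂) : FreeGroup.reduce l₂ = l₂ := by
  by_contra hne
  have hlt : (FreeGroup.reduce l₂).length < l₂.length :=
    lt_of_le_of_ne (FreeGroup.Red.length_le FreeGroup.reduce.red)
      (fun he => hne ((FreeGroup.Red.sublist FreeGroup.reduce.red).eq_of_length he))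
  have hred : FreeGroup.Red (l₁ ++ l₂) (l₁ ++ FreeGroup.reduce l₂) :=
    FreeGroup.Red.append_append FreeGroup.Red.refl FreeGroup.reduce.red
  have heq := FreeGroup.reduce.eq_of_red hred
  rw [h] at heq
  have hle : (FreeGroup.reduce (l₁ ++ FreeGroup.reduce l₂)).length
      ≤ (l₁ ++ FreeGroup.reduce l₂).length :=
    FreeGroup.Red.length_le FreeGroup.reduce.red
  rw [← heq] at hle
  simp only [List.length_append] at hle
  omega

private lemma reduced_prefix {α : Type*} [DecidableEq α] {l₁ l₂ : List (α × Bool)}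
    (h : FreeGroup.reduce (l₁ ++ l₂) = l₁ ++ l₂) : FreeGroup.reduce l₁ = l₁ := by
  by_contra hne
  have hlt : (FreeGroup.reduce l₁).length < l₁.length :=
    lt_of_le_of_ne (FreeGroup.Red.length_le FreeGroup.reduce.red)
      (fun he => hne ((FreeGroup.Red.sublist FreeGroup.reduce.red).eq_of_length he))
  have hred : FreeGroup.Red (l₁ ++ l₂) (FreeGroup.reduce l₁ ++ l₂) :=
    FreeGroup.Red.append_append FreeGroup.reduce.red FreeGroup.Red.refl
  have heq := FreeGroup.reduce.eq_of_red hred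
  rw [h] at heq
  have hle : (FreeGroup.reduce (FreeGroup.reduce l₁ ++ l₂)).length
      ≤ (FreeGroup.reduce l₁ ++ l₂).length :=
    FreeGroup.Red.length_le FreeGroup.reduce.red
  rw [← heq] at hle
  simp only [List.length_append] at hle
  omega

/-- For the free group `F_n` on `n ≥ 1` generators and `B ≥ 1`, the subgroup generated
by all elements of reduced word length exactly `B` has finite index in `F_n`. -/
theorem length_B_words_generate_finite_index (n B : ℕ) (hn : 1 ≤ n) (hB : 1 ≤ B) :
    (Subgroup.closure {x : FreeGroup (Fin n) | x.toWord.length = B}).FiniteIndex := by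
  set H := Subgroup.closure {x : FreeGroup (Fin n) | x.toWord.length = B} with hH
  -- Every coset has a representative of word length < B
  have key : ∀ m : ℕ, ∀ w : FreeGroup (Fin n), w.toWord.length = m →
      ∃ v : FreeGroup (Fin n), v.toWord.length < B ∧
        (QuotientGroup.mk w : FreeGroup (Fin n) ⧸ H) = QuotientGroup.mk v := by
    intro m
    induction m using Nat.strong_induction_on with
    | _ m ih =>
      intro w hw
      by_cases hmB : m < B
      · exact ⟨w, hw ▸ hmB, rfl⟩
      push_neg at hmB
      set l := w.toWord with hl
      have hsplit : l = l.take (m - B) ++ l.drop (m - B) := (List.take_append_drop _ _).symm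
      have hredl : FreeGroup.reduce l = l := FreeGroup.reduce_toWord w
      rw [hsplit] at hredl
      have hred2 : FreeGroup.reduce (l.drop (m - B)) = l.drop (m - B) := reduced_suffix hredl
      have hred1 : FreeGroup.reduce (l.take (m - B)) = l.take (m - B) := reduced_prefix hredl
      have hlen : l.length = m := hw
      have hlen2 : (l.drop (m - B)).length = B := by
        rw [List.length_drop, hlen]; omega
      have hlen1 : (l.take (m - B)).length = m - B := by
        rw [List.length_take, hlen]; omega
      have hw_eq : w = FreeGroup.mk (l.take (m - B)) * FreeGroup.mk (l.drop (m - B)) := by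
        rw [FreeGroup.mul_mk, ← hsplit, hl, FreeGroup.mk_toWord]
      have hmem : FreeGroup.mk (l.drop (m - B)) ∈ H := by
        apply Subgroup.subset_closure
        show (FreeGroup.mk (l.drop (m - B))).toWord.length = B
        rw [FreeGroup.toWord_mk, hred2, hlen2]
      have hq : (QuotientGroup.mk w : FreeGroup (Fin n) ⧸ H)
          = QuotientGroup.mk (FreeGroup.mk (l.take (m - B))) := by
        rw [QuotientGroup.eq]
        have : w⁻¹ * FreeGroup.mk (l.take (m - B)) = (FreeGroup.mk (l.drop (m - B)))⁻¹ := by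
          rw [hw_eq]; group
        rw [this]
        exact inv_mem hmem
      have hlt : (FreeGroup.mk (l.take (m - B))).toWord.length < m := by
        rw [FreeGroup.toWord_mk, hred1, hlen1]; omega
      obtain ⟨v, hv1, hv2⟩ := ih _ hlt (FreeGroup.mk (l.take (m - B))) rfl
      exact ⟨v, hv1, hq.trans hv2⟩
  -- The set of elements of word length < B is finite
  have hfin : ({v : FreeGroup (Fin n) | v.toWord.length < B}).Finite := by
    have : {v : FreeGroup (Fin n) | v.toWord.length < B}
        = FreeGroup.toWord ⁻¹' {l : List (Fin n × Bool) | l.length < B} := rfl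
    rw [this]
    exact Set.Finite.preimage FreeGroup.toWord_injective.injOn
      (List.finite_length_lt _ _)
  haveI : Finite {v : FreeGroup (Fin n) // v.toWord.length < B} := hfin
  have hsurj : Function.Surjective
      (fun v : {v : FreeGroup (Fin n) // v.toWord.length < B} =>
        (QuotientGroup.mk v.1 : FreeGroup (Fin n) ⧸ H)) := by
    intro q
    obtain ⟨w, rfl⟩ := @QuotientGroup.mk_surjective _ _ H q
    obtain ⟨v, hv1, hv2⟩ := key w.toWord.length w rfl
    exact ⟨⟨v, hv1⟩, hv2.symm⟩
  haveI : Finite (FreeGroup (Fin n) ⧸ H) := Finite.of_surjective _ hsurj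
  exact Subgroup.finiteIndex_of_finite_quotient
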